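/- Let (X,d,m,ℰ,ℱ) be a conservative MMD space with doubling measure m whose heat kernel satisfies the sub-Gaussian upper bound p_t(x,y) ≤ C₁/m(B(x,Ψ⁻¹(t))) · exp(−c₁ t Φ(c₂ d(x,y)/t)) for a scale function Ψ, with Φ(s) = sup_{r>0}(s/r − 1/Ψ(r)). Then for every f ∈ L²(X,m) and every r > 0, lim_{t↓0} (1/2t) ∫_X ∫_{X \ B(x,r)} (f(x)−f(y))² p_t(x,y) m(dy) m(dx) = 0. -/

import Mathlib

open scoped ENNReal
open MeasureTheory

/-- The Legendre-type transform `Φ(s) = sup_{r>0} (s/r - 1/Ψ(r))` of a scale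
function `Ψ`. -/
noncomputable def Phi (Ψ : ℝ → ℝ) (s : ℝ) : ℝ :=
  sSup {t : ℝ | ∃ r > (0:ℝ), t = s / r - 1 / Ψ r}

lemma phi_lower (Ψ : ℝ → ℝ) (C β₁ : ℝ) (hC : 1 < C) (hβ₁ : 1 < β₁)
    (hΨpos : ∀ ρ > (0:ℝ), 0 < Ψ ρ)
    (hreg : ∀ ρ R : ℝ, 0 < ρ → ρ ≤ R → C⁻¹ * (R/ρ)^β₁ ≤ Ψ R / Ψ ρ)
    (s : ℝ) (hs : 0 < s) (r₀ : ℝ) (hr₀ : 0 < r₀) :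
    s / r₀ - 1 / Ψ r₀ ≤ Phi Ψ s := by
  refine le_csSup ?_ ⟨r₀, hr₀, rfl⟩
  have hΨ1 : 0 < Ψ 1 := hΨpos 1 one_pos
  set K : ℝ := (C * Ψ 1)⁻¹ with hKdef
  have hK : 0 < K := by positivity
  set W : ℝ := max ((s/K) ^ (1/(β₁-1))) 1 with hWdef
  have hW1 : (1:ℝ) ≤ W := le_max_right _ _
  refine ⟨max s (s * W), ?_⟩
  rintro x ⟨ρ, hρ, rfl⟩
  have hΨρ : 0 < Ψ ρ := hΨpos ρ hρ
  rcases le_or_gt 1 ρ with h1ρ | hρ1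
  · have : s / ρ ≤ s := div_le_self hs.le h1ρ
    have h0 : 0 < 1 / Ψ ρ := by positivity
    calc s / ρ - 1 / Ψ ρ ≤ s / ρ := by linarith
    _ ≤ s := this
    _ ≤ max s (s*W) := le_max_left _ _
  · -- ρ < 1
    set w : ℝ := 1/ρ with hwdef
    have hw1 : 1 < w := by rw [hwdef]; exact one_lt_one_div hρ hρ1
    have hw0 : 0 < w := by positivity
    have hKw : K * w ^ β₁ ≤ 1 / Ψ ρ := by
      have h := hreg ρ 1 hρ hρ1.le
      have heq : K * w ^ β₁ = (C⁻¹ * (1/ρ) ^ β₁) / Ψ 1 := by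
        rw [hKdef, hwdef, mul_inv]; field_simp
      rw [heq]
      calc (C⁻¹ * (1/ρ) ^ β₁) / Ψ 1 ≤ (Ψ 1 / Ψ ρ) / Ψ 1 := by gcongr
      _ = 1 / Ψ ρ := by field_simp
    have hsw : s / ρ = s * w := by rw [hwdef]; field_simp
    have step : s / ρ - 1 / Ψ ρ ≤ s * w - K * w ^ β₁ := by
      rw [hsw]; linarith
    rcases le_or_gt w W with hwW | hWw
    · calc s / ρ - 1 / Ψ ρ ≤ s * w - K * w ^ β₁ := step
      _ ≤ s * w := by
          have : 0 < K * w ^ β₁ := by positivity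
          linarith
      _ ≤ s * W := by nlinarith
      _ ≤ max s (s * W) := le_max_right _ _
    · -- w > W : term is ≤ 0
      have hβ0 : β₁ - 1 ≠ 0 := by linarith
      have hsK : (0:ℝ) ≤ s / K := by positivity
      have h1 : (s/K) ^ (1/(β₁-1)) ≤ w := le_of_lt (lt_of_le_of_lt (le_max_left _ _) hWw)
      have h2 : s / K ≤ w ^ (β₁ - 1) := by
        calc s / K = ((s/K) ^ (1/(β₁-1))) ^ (β₁ - 1) := by
              rw [one_div, Real.rpow_inv_rpow hsK hβ0]
        _ ≤ w ^ (β₁ - 1) := Real.rpow_le_rpow (Real.rpow_nonneg hsK _) h1 (by linarith)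
      have h3 : s * w ≤ K * w ^ β₁ := by
        have : s ≤ K * w ^ (β₁ - 1) := by
          rw [div_le_iff₀ hK] at h2; linarith [h2]
        calc s * w ≤ (K * w ^ (β₁ - 1)) * w := by nlinarith
        _ = K * w ^ β₁ := by
            rw [mul_assoc, ← Real.rpow_add_one (ne_of_gt hw0)]
            ring_nf
      calc s / ρ - 1 / Ψ ρ ≤ s * w - K * w ^ β₁ := step
      _ ≤ 0 := by linarith
      _ ≤ s := hs.le
      _ ≤ max s (s * W) := le_max_left _ _


lemma doub_iter {X : Type*} [MetricSpace X] [MeasurableSpace X] (m : Measure X) (D₀ : ℝ≥0∞)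
    (hdoub : ∀ (x : X) (ρ : ℝ), 0 < ρ → m (Metric.ball x (2*ρ)) ≤ D₀ * m (Metric.ball x ρ)) :
    ∀ (n : ℕ) (x : X) (ρ : ℝ), 0 < ρ → m (Metric.ball x (2^n*ρ)) ≤ D₀^n * m (Metric.ball x ρ) := by
  intro n
  induction n with
  | zero => intro x ρ hρ; simp
  | succ n ih =>
    intro x ρ hρ
    have h1 : (2:ℝ)^(n+1)*ρ = 2*(2^n*ρ) := by ring
    rw [h1]
    calc m (Metric.ball x (2*(2^n*ρ))) ≤ D₀ * m (Metric.ball x (2^n*ρ)) :=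
          hdoub x (2^n*ρ) (by positivity)
    _ ≤ D₀ * (D₀^n * m (Metric.ball x ρ)) := mul_le_mul_right (ih x ρ hρ) _
    _ = D₀^(n+1) * m (Metric.ball x ρ) := by rw [pow_succ]; ring

lemma geom_sum_le (d e : ℝ≥0∞) (h : d * e ≤ 1/2) :
    ∑' k : ℕ, d^k * e^(k+1) ≤ 2 * e := by
  have h1 : ∀ k : ℕ, d^k * e^(k+1) = (d*e)^k * e := by
    intro k; rw [pow_succ, mul_pow]; ring
  calc ∑' k : ℕ, d^k * e^(k+1) = ∑' k : ℕ, (d*e)^k * e := by simp_rw [h1]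
  _ = (∑' k : ℕ, (d*e)^k) * e := ENNReal.tsum_mul_right
  _ ≤ (∑' k : ℕ, (1/2 : ℝ≥0∞)^k) * e := by
      gcongr

  _ = 2 * e := by
      rw [ENNReal.tsum_geometric, one_div, ENNReal.one_sub_inv_two, inv_inv]

section Tail
variable {X : Type*} [MetricSpace X] [MeasurableSpace X] [BorelSpace X]
  (m : Measure X) (D₀ : ℝ≥0∞)
  (r ρ a K : ℝ) (N : ℕ) (q : X → X → ℝ≥0∞)

lemma annuli_cover (hr : 0 < r) (x : X) :
    (Metric.ball x r)ᶜ ⊆ ⋃ k : ℕ, (Metric.ball x (2^(k+1)*r) \ Metric.ball x (2^k*r)) := by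
  intro y hy
  simp only [Set.mem_compl_iff, Metric.mem_ball, not_lt] at hy
  have hex : ∃ n : ℕ, dist y x < 2^(n+1)*r := by
    obtain ⟨n, hn⟩ := pow_unbounded_of_one_lt (dist y x / r) (by norm_num : (1:ℝ) < 2)
    refine ⟨n, ?_⟩
    rw [div_lt_iff₀ hr] at hn
    have : (2:ℝ)^n * r ≤ 2^(n+1)*r := by
      have : (2:ℝ)^n ≤ 2^(n+1) := by
        apply pow_le_pow_right₀ (by norm_num) (by omega)
      nlinarith
    linarith
  classical
  set n := Nat.find hex with hn
  have h1 : dist y x < 2^(n+1)*r := Nat.find_spec hex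
  have h2 : 2^n * r ≤ dist y x := by
    rcases Nat.eq_zero_or_pos n with h0 | hpos
    · rw [h0]; simpa using hy
    · have hmin := Nat.find_min hex (show n - 1 < n from Nat.pred_lt hpos.ne')
      rw [not_lt] at hmin
      have h3 : (2:ℝ)^(n-1+1) * r ≤ dist y x := hmin
      rwa [Nat.sub_add_cancel hpos] at h3
  exact Set.mem_iUnion.mpr ⟨n, (Set.mem_diff _).mpr ⟨Metric.mem_ball.mpr h1,
    fun hmem => absurd (Metric.mem_ball.mp hmem) (not_lt.mpr h2)⟩⟩

end Tail

section Tail2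
variable {X : Type*} [MetricSpace X] [MeasurableSpace X] [BorelSpace X]

lemma tail_y (m : Measure X) (D₀ : ℝ≥0∞) (hD₀ : 1 ≤ D₀) (hD₀top : D₀ ≠ ⊤)
    (hmball : ∀ (x : X) (ρ : ℝ), 0 < ρ →
      0 < m (Metric.ball x ρ) ∧ m (Metric.ball x ρ) < ⊤)
    (hdoub : ∀ (x : X) (ρ : ℝ), 0 < ρ →
      m (Metric.ball x (2*ρ)) ≤ D₀ * m (Metric.ball x ρ))
    (r ρ a K : ℝ) (hr : 0 < r) (hρ : 0 < ρ) (hρr : ρ ≤ r) (ha : 0 < a) (hK : 0 ≤ K)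
    (N : ℕ) (hN : r ≤ 2^N * ρ)
    (q : X → X → ℝ≥0∞)
    (hq : ∀ x y, r ≤ dist x y →
      q x y ≤ ENNReal.ofReal (K * Real.exp (-(a * (dist x y / ρ)))) / m (Metric.ball x ρ))
    (hsmall : D₀^2 * ENNReal.ofReal (Real.exp (-(a * (r/ρ)))) ≤ 1/2)
    (x : X) :
    ∫⁻ y in (Metric.ball x r)ᶜ, q x y ∂m ≤
      D₀^(3+2*N) * ENNReal.ofReal (2*K) * ENNReal.ofReal (Real.exp (-(a * (r/ρ)))) := by
  set E := ENNReal.ofReal (Real.exp (-(a * (r/ρ)))) with hE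
  set A : ℕ → Set X := fun k => Metric.ball x (2^(k+1)*r) \ Metric.ball x (2^k*r) with hA
  obtain ⟨hmpos, hmtop⟩ := hmball x ρ hρ
  -- pointwise bound on each annulus
  have hexp_bound : ∀ (k : ℕ) (d : ℝ), 2^k * r ≤ d →
      Real.exp (-(a * (d / ρ))) ≤ Real.exp (-(a * (r/ρ))) ^ (k+1) := by
    intro k d hd
    rw [← Real.exp_nat_mul]
    apply Real.exp_le_exp.mpr
    have h2k : (k+1 : ℝ) ≤ 2^k := by
      exact_mod_cast (Nat.lt_two_pow_self (n := k))
    have hrρ : 0 < r / ρ := by positivity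
    have hstep : (k+1:ℝ) * (r/ρ) ≤ d / ρ := by
      calc (k+1:ℝ) * (r/ρ) ≤ 2^k * (r/ρ) := by nlinarith
      _ = (2^k * r)/ρ := by ring
      _ ≤ d / ρ := by gcongr
    push_cast
    nlinarith [mul_le_mul_of_nonneg_left hstep ha.le]
  have hpoint : ∀ (k : ℕ), ∀ y ∈ A k,
      q x y ≤ ENNReal.ofReal K * E^(k+1) * (m (Metric.ball x ρ))⁻¹ := by
    intro k y hy
    obtain ⟨hy1, hy2⟩ := hy
    have hd : 2^k * r ≤ dist x y := by
      rw [Metric.mem_ball, not_lt] at hy2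
      rw [dist_comm]; exact hy2
    have h1le : (1:ℝ) ≤ 2^k := one_le_pow₀ (by norm_num)
    have hrd : r ≤ dist x y := le_trans (by nlinarith) hd
    calc q x y ≤ ENNReal.ofReal (K * Real.exp (-(a * (dist x y / ρ)))) / m (Metric.ball x ρ) :=
          hq x y hrd
    _ ≤ ENNReal.ofReal (K * Real.exp (-(a * (r/ρ))) ^ (k+1)) / m (Metric.ball x ρ) := by
        gcongr
        exact hexp_bound k _ hd
    _ = ENNReal.ofReal K * E^(k+1) * (m (Metric.ball x ρ))⁻¹ := by
        rw [ENNReal.ofReal_mul hK, ENNReal.ofReal_pow (Real.exp_nonneg _), div_eq_mul_inv, hE]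
  have hmA : ∀ k : ℕ, m (A k) ≤ D₀^(k+1+N) * m (Metric.ball x ρ) := by
    intro k
    calc m (A k) ≤ m (Metric.ball x (2^(k+1)*r)) := measure_mono Set.diff_subset
    _ ≤ m (Metric.ball x (2^(k+1+N)*ρ)) := by
        apply measure_mono (Metric.ball_subset_ball _)
        rw [show (2:ℝ)^(k+1+N) = 2^(k+1)*2^N from pow_add 2 (k+1) N]
        have h2 : (0:ℝ) < 2^(k+1) := by positivity
        nlinarith
    _ ≤ D₀^(k+1+N) * m (Metric.ball x ρ) := doub_iter m D₀ hdoub _ x ρ hρ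
  have hAk : ∀ k : ℕ, ∫⁻ y in A k, q x y ∂m ≤ D₀^(k+1+N) * (ENNReal.ofReal K * E^(k+1)) := by
    intro k
    have hmeasA : MeasurableSet (A k) :=
      Metric.isOpen_ball.measurableSet.diff Metric.isOpen_ball.measurableSet
    calc ∫⁻ y in A k, q x y ∂m
        ≤ ∫⁻ _y in A k, (ENNReal.ofReal K * E^(k+1) * (m (Metric.ball x ρ))⁻¹) ∂m :=
          setLIntegral_mono' hmeasA (hpoint k)
    _ = (ENNReal.ofReal K * E^(k+1) * (m (Metric.ball x ρ))⁻¹) * m (A k) := by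
        rw [setLIntegral_const]
    _ ≤ (ENNReal.ofReal K * E^(k+1) * (m (Metric.ball x ρ))⁻¹) *
          (D₀^(k+1+N) * m (Metric.ball x ρ)) := by gcongr; exact hmA k
    _ = D₀^(k+1+N) * (ENNReal.ofReal K * E^(k+1)) *
          ((m (Metric.ball x ρ))⁻¹ * m (Metric.ball x ρ)) := by ring
    _ = D₀^(k+1+N) * (ENNReal.ofReal K * E^(k+1)) := by
        rw [ENNReal.inv_mul_cancel (ne_of_gt hmpos) hmtop.ne, mul_one]
  have hDsq : D₀ * E ≤ 1/2 := by
    refine le_trans ?_ hsmall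
    gcongr
    calc D₀ = D₀^1 := (pow_one D₀).symm
    _ ≤ D₀^2 := pow_le_pow_right' hD₀ (by omega)
  calc ∫⁻ y in (Metric.ball x r)ᶜ, q x y ∂m
      ≤ ∫⁻ y in ⋃ k, A k, q x y ∂m := lintegral_mono_set (annuli_cover r hr x)
  _ ≤ ∑' k : ℕ, ∫⁻ y in A k, q x y ∂m := lintegral_iUnion_le _ _
  _ ≤ ∑' k : ℕ, D₀^(k+1+N) * (ENNReal.ofReal K * E^(k+1)) := ENNReal.tsum_le_tsum hAk
  _ = D₀^(1+N) * ENNReal.ofReal K * ∑' k : ℕ, D₀^k * E^(k+1) := by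
      rw [← ENNReal.tsum_mul_left]
      congr 1; funext k; rw [pow_add]; ring
  _ ≤ D₀^(1+N) * ENNReal.ofReal K * (2 * E) := by
      gcongr
      exact geom_sum_le D₀ E hDsq
  _ ≤ D₀^(3+2*N) * ENNReal.ofReal (2*K) * E := by
      rw [ENNReal.ofReal_mul (by norm_num : (0:ℝ) ≤ 2), ENNReal.ofReal_ofNat]
      calc D₀^(1+N) * ENNReal.ofReal K * (2 * E)
          = D₀^(1+N) * (2 * ENNReal.ofReal K) * E := by ring
      _ ≤ D₀^(3+2*N) * (2 * ENNReal.ofReal K) * E := by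
          exact mul_le_mul_left (mul_le_mul_left
            (pow_le_pow_right' hD₀ (by omega)) _) _

lemma tail_x (m : Measure X) (D₀ : ℝ≥0∞) (hD₀ : 1 ≤ D₀) (hD₀top : D₀ ≠ ⊤)
    (hmball : ∀ (x : X) (ρ : ℝ), 0 < ρ →
      0 < m (Metric.ball x ρ) ∧ m (Metric.ball x ρ) < ⊤)
    (hdoub : ∀ (x : X) (ρ : ℝ), 0 < ρ →
      m (Metric.ball x (2*ρ)) ≤ D₀ * m (Metric.ball x ρ))
    (r ρ a K : ℝ) (hr : 0 < r) (hρ : 0 < ρ) (hρr : ρ ≤ r) (ha : 0 < a) (hK : 0 ≤ K)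
    (N : ℕ) (hN : r ≤ 2^N * ρ)
    (q : X → X → ℝ≥0∞)
    (hq : ∀ x y, r ≤ dist x y →
      q x y ≤ ENNReal.ofReal (K * Real.exp (-(a * (dist x y / ρ)))) / m (Metric.ball x ρ))
    (hsmall : D₀^2 * ENNReal.ofReal (Real.exp (-(a * (r/ρ)))) ≤ 1/2)
    (y : X) :
    ∫⁻ x in (Metric.ball y r)ᶜ, q x y ∂m ≤
      D₀^(3+2*N) * ENNReal.ofReal (2*K) * ENNReal.ofReal (Real.exp (-(a * (r/ρ)))) := by
  set E := ENNReal.ofReal (Real.exp (-(a * (r/ρ)))) with hE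
  set A : ℕ → Set X := fun k => Metric.ball y (2^(k+1)*r) \ Metric.ball y (2^k*r) with hA
  obtain ⟨hmposy, hmtopy⟩ := hmball y ρ hρ
  have hexp_bound : ∀ (k : ℕ) (d : ℝ), 2^k * r ≤ d →
      Real.exp (-(a * (d / ρ))) ≤ Real.exp (-(a * (r/ρ))) ^ (k+1) := by
    intro k d hd
    rw [← Real.exp_nat_mul]
    apply Real.exp_le_exp.mpr
    have h2k : (k+1 : ℝ) ≤ 2^k := by exact_mod_cast (Nat.lt_two_pow_self (n := k))
    have hrρ : 0 < r / ρ := by positivity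
    have hstep : (k+1:ℝ) * (r/ρ) ≤ d / ρ := by
      calc (k+1:ℝ) * (r/ρ) ≤ 2^k * (r/ρ) := by nlinarith
      _ = (2^k * r)/ρ := by ring
      _ ≤ d / ρ := by gcongr
    push_cast
    nlinarith [mul_le_mul_of_nonneg_left hstep ha.le]
  -- comparison of balls centered at x and at y
  have hinvball : ∀ (k : ℕ), ∀ x ∈ A k,
      (m (Metric.ball x ρ))⁻¹ ≤ D₀^(k+2+N) * (m (Metric.ball y ρ))⁻¹ := by
    intro k x hx
    obtain ⟨hx1, hx2⟩ := hx
    rw [Metric.mem_ball] at hx1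
    have h1le : (1:ℝ) ≤ 2^(k+1) := one_le_pow₀ (by norm_num)
    have hsub : Metric.ball y ρ ⊆ Metric.ball x (2^(k+2)*r) := by
      intro z hz
      rw [Metric.mem_ball] at hz ⊢
      have h3 : dist z x ≤ dist z y + dist y x := dist_triangle z y x
      have h4 : dist y x < 2^(k+1)*r := by rw [dist_comm]; exact hx1
      have h5 : (2:ℝ)^(k+2)*r = 2^(k+1)*r + 2^(k+1)*r := by ring
      nlinarith
    have hcomp : m (Metric.ball y ρ) ≤ D₀^(k+2+N) * m (Metric.ball x ρ) := by
      calc m (Metric.ball y ρ) ≤ m (Metric.ball x (2^(k+2)*r)) := measure_mono hsub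
      _ ≤ m (Metric.ball x (2^(k+2+N)*ρ)) := by
          apply measure_mono (Metric.ball_subset_ball _)
          rw [show (2:ℝ)^(k+2+N) = 2^(k+2)*2^N from pow_add 2 (k+2) N]
          have h2 : (0:ℝ) < 2^(k+2) := by positivity
          nlinarith
      _ ≤ D₀^(k+2+N) * m (Metric.ball x ρ) := doub_iter m D₀ hdoub _ x ρ hρ
    have hc0 : (D₀^(k+2+N) : ℝ≥0∞) ≠ 0 := by
      apply pow_ne_zero
      exact fun h => by simp [h] at hD₀
    have hctop : (D₀^(k+2+N) : ℝ≥0∞) ≠ ⊤ := ENNReal.pow_ne_top hD₀top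
    have step1 : (D₀^(k+2+N) * m (Metric.ball x ρ))⁻¹ ≤ (m (Metric.ball y ρ))⁻¹ :=
      ENNReal.inv_le_inv.mpr hcomp
    rw [ENNReal.mul_inv (Or.inl hc0) (Or.inl hctop)] at step1
    calc (m (Metric.ball x ρ))⁻¹
        = D₀^(k+2+N) * ((D₀^(k+2+N))⁻¹ * (m (Metric.ball x ρ))⁻¹) := by
          rw [← mul_assoc, ENNReal.mul_inv_cancel hc0 hctop, one_mul]
    _ ≤ D₀^(k+2+N) * (m (Metric.ball y ρ))⁻¹ := mul_le_mul_right step1 _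
  have hpoint : ∀ (k : ℕ), ∀ x ∈ A k,
      q x y ≤ D₀^(k+2+N) * (ENNReal.ofReal K * E^(k+1)) * (m (Metric.ball y ρ))⁻¹ := by
    intro k x hx
    have hd : 2^k * r ≤ dist x y := by
      have hx2 := hx.2
      rw [Metric.mem_ball, not_lt] at hx2
      exact hx2
    have h1le : (1:ℝ) ≤ 2^k := one_le_pow₀ (by norm_num)
    have hrd : r ≤ dist x y := le_trans (by nlinarith) hd
    calc q x y ≤ ENNReal.ofReal (K * Real.exp (-(a * (dist x y / ρ)))) / m (Metric.ball x ρ) :=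
          hq x y hrd
    _ ≤ ENNReal.ofReal (K * Real.exp (-(a * (r/ρ))) ^ (k+1)) / m (Metric.ball x ρ) := by
        gcongr
        exact hexp_bound k _ hd
    _ = (ENNReal.ofReal K * E^(k+1)) * (m (Metric.ball x ρ))⁻¹ := by
        rw [ENNReal.ofReal_mul hK, ENNReal.ofReal_pow (Real.exp_nonneg _), div_eq_mul_inv, hE]
    _ ≤ (ENNReal.ofReal K * E^(k+1)) * (D₀^(k+2+N) * (m (Metric.ball y ρ))⁻¹) :=
        mul_le_mul_right (hinvball k x hx) _
    _ = D₀^(k+2+N) * (ENNReal.ofReal K * E^(k+1)) * (m (Metric.ball y ρ))⁻¹ := by ring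
  have hmA : ∀ k : ℕ, m (A k) ≤ D₀^(k+1+N) * m (Metric.ball y ρ) := by
    intro k
    calc m (A k) ≤ m (Metric.ball y (2^(k+1)*r)) := measure_mono Set.diff_subset
    _ ≤ m (Metric.ball y (2^(k+1+N)*ρ)) := by
        apply measure_mono (Metric.ball_subset_ball _)
        rw [show (2:ℝ)^(k+1+N) = 2^(k+1)*2^N from pow_add 2 (k+1) N]
        have h2 : (0:ℝ) < 2^(k+1) := by positivity
        nlinarith
    _ ≤ D₀^(k+1+N) * m (Metric.ball y ρ) := doub_iter m D₀ hdoub _ y ρ hρ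
  have hAk : ∀ k : ℕ, ∫⁻ x in A k, q x y ∂m ≤
      D₀^(2*k+3+2*N) * (ENNReal.ofReal K * E^(k+1)) := by
    intro k
    have hmeasA : MeasurableSet (A k) :=
      Metric.isOpen_ball.measurableSet.diff Metric.isOpen_ball.measurableSet
    calc ∫⁻ x in A k, q x y ∂m
        ≤ ∫⁻ _x in A k, (D₀^(k+2+N) * (ENNReal.ofReal K * E^(k+1)) *
            (m (Metric.ball y ρ))⁻¹) ∂m := setLIntegral_mono' hmeasA (hpoint k)
    _ = (D₀^(k+2+N) * (ENNReal.ofReal K * E^(k+1)) * (m (Metric.ball y ρ))⁻¹) * m (A k) := by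
        rw [setLIntegral_const]
    _ ≤ (D₀^(k+2+N) * (ENNReal.ofReal K * E^(k+1)) * (m (Metric.ball y ρ))⁻¹) *
          (D₀^(k+1+N) * m (Metric.ball y ρ)) := by gcongr; exact hmA k
    _ = D₀^(k+2+N) * D₀^(k+1+N) * (ENNReal.ofReal K * E^(k+1)) *
          ((m (Metric.ball y ρ))⁻¹ * m (Metric.ball y ρ)) := by ring
    _ = D₀^(2*k+3+2*N) * (ENNReal.ofReal K * E^(k+1)) := by
        rw [ENNReal.inv_mul_cancel (ne_of_gt hmposy) hmtopy.ne, mul_one, ← pow_add]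
        congr 2
        omega
  have hDsq : D₀^2 * E ≤ 1/2 := hsmall
  calc ∫⁻ x in (Metric.ball y r)ᶜ, q x y ∂m
      ≤ ∫⁻ x in ⋃ k, A k, q x y ∂m := lintegral_mono_set (annuli_cover r hr y)
  _ ≤ ∑' k : ℕ, ∫⁻ x in A k, q x y ∂m := lintegral_iUnion_le _ _
  _ ≤ ∑' k : ℕ, D₀^(2*k+3+2*N) * (ENNReal.ofReal K * E^(k+1)) := ENNReal.tsum_le_tsum hAk
  _ = D₀^(3+2*N) * ENNReal.ofReal K * ∑' k : ℕ, (D₀^2)^k * E^(k+1) := by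
      rw [← ENNReal.tsum_mul_left]
      congr 1; funext k
      rw [show 2*k+3+2*N = 2*k+(3+2*N) from by omega, pow_add, pow_mul]
      ring
  _ ≤ D₀^(3+2*N) * ENNReal.ofReal K * (2 * E) := by
      gcongr
      exact geom_sum_le (D₀^2) E hDsq
  _ = D₀^(3+2*N) * ENNReal.ofReal (2*K) * E := by
      rw [ENNReal.ofReal_mul (by norm_num : (0:ℝ) ≤ 2), ENNReal.ofReal_ofNat]
      ring

end Tail2
lemma doubling_totallyBounded {X : Type*} [MetricSpace X] [MeasurableSpace X] [BorelSpace X]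
    (m : Measure X) (D₀ : ℝ≥0∞) (hD₀top : D₀ ≠ ⊤)
    (hmball : ∀ (x : X) (ρ : ℝ), 0 < ρ →
      0 < m (Metric.ball x ρ) ∧ m (Metric.ball x ρ) < ⊤)
    (hdoub : ∀ (x : X) (ρ : ℝ), 0 < ρ →
      m (Metric.ball x (2*ρ)) ≤ D₀ * m (Metric.ball x ρ))
    (x₀ : X) (R : ℝ) (hR : 0 < R) :
    TotallyBounded (Metric.ball x₀ R) := by
  classical
  rw [Metric.totallyBounded_iff]
  intro ε hε
  obtain ⟨k, hk⟩ : ∃ k : ℕ, 4*R/ε < 2^k := pow_unbounded_of_one_lt _ one_lt_two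
  have hk' : 2*R ≤ 2^k * (ε/2) := by
    rw [div_lt_iff₀ hε] at hk; nlinarith
  have hc := (hmball x₀ R hR).1
  have hctop := (hmball x₀ R hR).2
  have hMtop := (hmball x₀ (R+ε) (by linarith)).2
  set c := m (Metric.ball x₀ R) with hcdef
  set M := m (Metric.ball x₀ (R+ε)) with hMdef
  have hcball : ∀ y : X, y ∈ Metric.ball x₀ R → c ≤ D₀^k * m (Metric.ball y (ε/2)) := by
    intro y hy
    rw [Metric.mem_ball] at hy
    have hsub : Metric.ball x₀ R ⊆ Metric.ball y (2^k * (ε/2)) := by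
      intro z hz
      rw [Metric.mem_ball] at hz ⊢
      have h1 := dist_triangle z x₀ y
      have hyx : dist x₀ y < R := by rw [dist_comm]; exact hy
      linarith
    calc c ≤ m (Metric.ball y (2^k*(ε/2))) := measure_mono hsub
    _ ≤ D₀^k * m (Metric.ball y (ε/2)) := doub_iter m D₀ hdoub k y (ε/2) (by positivity)
  have hcard : ∀ s : Finset X, (↑s ⊆ Metric.ball x₀ R) →
      (∀ x ∈ s, ∀ y ∈ s, x ≠ y → ε ≤ dist x y) → (s.card : ℝ≥0∞) * c ≤ D₀^k * M := by
    intro s hs hsep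
    have hdisj : Set.PairwiseDisjoint (↑s : Set X) (fun y => Metric.ball y (ε/2)) := by
      intro u hu v hv huv
      show Disjoint (Metric.ball u (ε/2)) (Metric.ball v (ε/2))
      have hduv : ε/2 + ε/2 ≤ dist u v := by
        have := hsep u hu v hv huv
        linarith
      exact Metric.ball_disjoint_ball hduv
    have hsum : (∑ y ∈ s, m (Metric.ball y (ε/2))) = m (⋃ y ∈ s, Metric.ball y (ε/2)) :=
      (measure_biUnion_finset hdisj (fun y _ => Metric.isOpen_ball.measurableSet)).symm
    have hunion : m (⋃ y ∈ s, Metric.ball y (ε/2)) ≤ M := by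
      apply measure_mono
      intro z hz
      simp only [Set.mem_iUnion] at hz
      obtain ⟨y, hy, hz⟩ := hz
      have h1 : dist y x₀ < R := Metric.mem_ball.mp (hs hy)
      rw [Metric.mem_ball] at hz ⊢
      have := dist_triangle z y x₀
      linarith
    calc (s.card : ℝ≥0∞) * c = ∑ _y ∈ s, c := by rw [Finset.sum_const, nsmul_eq_mul]
    _ ≤ ∑ y ∈ s, D₀^k * m (Metric.ball y (ε/2)) :=
        Finset.sum_le_sum (fun y hy => hcball y (hs hy))
    _ = D₀^k * ∑ y ∈ s, m (Metric.ball y (ε/2)) := by rw [Finset.mul_sum]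
    _ ≤ D₀^k * M := by rw [hsum]; exact mul_le_mul_right hunion _
  obtain ⟨n₀, hn₀⟩ : ∃ n₀ : ℕ, D₀^k * M / c < n₀ := by
    apply ENNReal.exists_nat_gt
    exact (ENNReal.div_lt_top (ENNReal.mul_ne_top (ENNReal.pow_ne_top hD₀top) hMtop.ne)
      hc.ne').ne
  have hcardn : ∀ s : Finset X, (↑s ⊆ Metric.ball x₀ R) →
      (∀ x ∈ s, ∀ y ∈ s, x ≠ y → ε ≤ dist x y) → s.card ≤ n₀ := by
    intro s hs hsep
    have h2 : (s.card : ℝ≥0∞) ≤ D₀^k * M / c :=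
      (ENNReal.le_div_iff_mul_le (Or.inl hc.ne') (Or.inl hctop.ne)).mpr (hcard s hs hsep)
    have h3 := lt_of_le_of_lt h2 hn₀
    exact_mod_cast h3.le
  set 𝒮 : Set ℕ := {n | ∃ s : Finset X, ↑s ⊆ Metric.ball x₀ R ∧
      (∀ x ∈ s, ∀ y ∈ s, x ≠ y → ε ≤ dist x y) ∧ s.card = n} with h𝒮def
  have h0 : 0 ∈ 𝒮 := ⟨∅, by simp, by simp, rfl⟩
  have hbdd : BddAbove 𝒮 := ⟨n₀, fun n ⟨s, hs1, hs2, hs3⟩ => hs3 ▸ hcardn s hs1 hs2⟩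
  obtain ⟨s, hs1, hs2, hs3⟩ := Nat.sSup_mem ⟨0, h0⟩ hbdd
  refine ⟨↑s, s.finite_toSet, ?_⟩
  intro z hz
  by_contra hcon
  simp only [Set.mem_iUnion, Metric.mem_ball, not_exists, not_lt] at hcon
  have hzs : z ∉ s := by
    intro hzs
    have := hcon z hzs
    rw [dist_self] at this
    linarith
  have hmem : (s.card + 1) ∈ 𝒮 := by
    refine ⟨insert z s, ?_, ?_, Finset.card_insert_of_notMem hzs⟩
    · rw [Finset.coe_insert, Set.insert_subset_iff]
      exact ⟨hz, hs1⟩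
    · intro x hx y hy hxy
      rcases Finset.mem_insert.mp hx with rfl | hx' <;>
        rcases Finset.mem_insert.mp hy with rfl | hy'
      · exact absurd rfl hxy
      · exact hcon y hy'
      · rw [dist_comm]; exact hcon x hx'
      · exact hs2 x hx' y hy' hxy
  have hle : s.card + 1 ≤ sSup 𝒮 := le_csSup hbdd hmem
  omega


set_option maxHeartbeats 2000000 in
/-- for a conservative heat kernel satisfying the sub-Gaussian upper
bound on a doubling metric measure space, the off-diagonal ("far") part of the
approximating form of any `L²` function tends to `0` as `t ↓ 0`. -/
theorem stmt19 {X : Type*} [MetricSpace X] [MeasurableSpace X] [BorelSpace X]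
    (m : Measure X)
    (D₀ : ℝ≥0∞) (hD₀ : 1 ≤ D₀) (hD₀top : D₀ ≠ ⊤)
    (hmball : ∀ (x : X) (ρ : ℝ), 0 < ρ →
      0 < m (Metric.ball x ρ) ∧ m (Metric.ball x ρ) < ⊤)
    (hdoub : ∀ (x : X) (ρ : ℝ), 0 < ρ →
      m (Metric.ball x (2*ρ)) ≤ D₀ * m (Metric.ball x ρ))
    (Ψ : ℝ → ℝ) (C β₁ β₂ : ℝ) (hC : 1 < C) (hβ₁ : 1 < β₁) (hβ : β₁ < β₂)
    (hΨpos : ∀ ρ > (0:ℝ), 0 < Ψ ρ)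
    (hΨmono : StrictMonoOn Ψ (Set.Ioi 0))
    (hΨcont : ContinuousOn Ψ (Set.Ioi 0))
    (hreg : ∀ ρ R : ℝ, 0 < ρ → ρ ≤ R →
      C⁻¹ * (R/ρ)^β₁ ≤ Ψ R / Ψ ρ ∧ Ψ R / Ψ ρ ≤ C * (R/ρ)^β₂)
    (ψinv : ℝ → ℝ) (hinv : ∀ t > (0:ℝ), 0 < ψinv t ∧ Ψ (ψinv t) = t)
    (p : ℝ → X → X → ℝ≥0∞)
    (hpmeas : ∀ t, Measurable (Function.uncurry (p t)))
    (hcons : ∀ t > (0:ℝ), ∀ x : X, ∫⁻ y, p t x y ∂m = 1)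
    (C₁ c₁ c₂ : ℝ) (hC₁ : 0 < C₁) (hc₁ : 0 < c₁) (hc₂ : 0 < c₂)
    (hub : ∀ t > (0:ℝ), ∀ x y : X,
      p t x y ≤ ENNReal.ofReal
          (C₁ * Real.exp (-(c₁ * t * Phi Ψ (c₂ * dist x y / t)))) /
        m (Metric.ball x (ψinv t)))
    (f : X → ℝ) (hf : MemLp f 2 m) (r : ℝ) (hr : 0 < r) :
    Filter.Tendsto
      (fun t => ENNReal.ofReal (1/(2*t)) *
        ∫⁻ x, ∫⁻ y in (Metric.ball x r)ᶜ,
          ENNReal.ofReal ((f x - f y)^2) * p t x y ∂m ∂m)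
      (nhdsWithin 0 (Set.Ioi 0)) (nhds 0) := by
  classical
  rcases isEmpty_or_nonempty X with hX | hX
  · have h0 : (fun t => ENNReal.ofReal (1/(2*t)) *
        ∫⁻ x, ∫⁻ y in (Metric.ball x r)ᶜ,
          ENNReal.ofReal ((f x - f y)^2) * p t x y ∂m ∂m) = fun _ => 0 := by
      funext t
      rw [lintegral_of_isEmpty, mul_zero]
    rw [h0]
    exact tendsto_const_nhds
  obtain ⟨x₀⟩ := hX
  haveI : SigmaFinite m := by
    refine ⟨⟨⟨fun n => Metric.ball x₀ (n+1), fun _ => trivial,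
      fun n => (hmball x₀ (n+1) (by positivity)).2, ?_⟩⟩⟩
    rw [Set.eq_univ_iff_forall]
    intro x
    obtain ⟨n, hn⟩ := exists_nat_gt (dist x x₀)
    exact Set.mem_iUnion.mpr ⟨n, Metric.mem_ball.mpr (by push_cast; linarith)⟩
  haveI : TopologicalSpace.SeparableSpace X := by
    have hsep : TopologicalSpace.IsSeparable (Set.univ : Set X) := by
      have hcover : (Set.univ : Set X) = ⋃ n : ℕ, Metric.ball x₀ (n+1) := by
        symm
        rw [Set.eq_univ_iff_forall]
        intro x
        obtain ⟨n, hn⟩ := exists_nat_gt (dist x x₀)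
        exact Set.mem_iUnion.mpr ⟨n, Metric.mem_ball.mpr (by push_cast; linarith)⟩
      rw [hcover]
      exact TopologicalSpace.IsSeparable.iUnion (fun n =>
        (doubling_totallyBounded m D₀ hD₀top hmball hdoub x₀ (n+1)
          (by positivity)).isSeparable)
    exact TopologicalSpace.isSeparable_univ_iff.mp hsep
  haveI : SecondCountableTopology X := UniformSpace.secondCountable_of_separable X
  -- constants
  set dR := D₀.toReal with hdRdef
  have hdR1 : 1 ≤ dR := by
    rw [hdRdef, ← ENNReal.toReal_one]
    exact ENNReal.toReal_mono hD₀top hD₀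
  have hdR0 : 0 < dR := lt_of_lt_of_le one_pos hdR1
  have hD₀eq : D₀ = ENNReal.ofReal dR := (ENNReal.ofReal_toReal hD₀top).symm
  set α := Real.logb 2 dR with hαdef
  have hα0 : 0 ≤ α := Real.logb_nonneg one_lt_two hdR1
  have h2α : (2:ℝ) ^ α = dR := Real.rpow_logb two_pos (by norm_num) hdR0
  set a := c₁ * c₂ with hadef
  have ha : 0 < a := by positivity
  set K := C₁ * Real.exp c₁ with hKdef
  have hK0 : 0 < K := by positivity
  set F := ∫⁻ x, ENNReal.ofReal ((f x)^2) ∂m with hFdef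
  have hFtop : F ≠ ⊤ := by
    have hint : Integrable (fun x => (f x)^2) m := hf.integrable_sq
    exact ne_of_lt hint.lintegral_lt_top
  set FR := F.toReal with hFRdef
  have hFR0 : 0 ≤ FR := ENNReal.toReal_nonneg
  have hFReq : F = ENNReal.ofReal FR := (ENNReal.ofReal_toReal hFtop).symm
  have hΨr : 0 < Ψ r := hΨpos r hr
  -- the decaying bound
  set G : ℝ → ℝ := fun v => C*v^β₂/(2*Ψ r) * (4*FR) * (dR^5*(v^α)^2) * (2*K) *
    Real.exp (-(a*v)) with hGdef
  have hG : Filter.Tendsto G Filter.atTop (nhds 0) := by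
    have base := tendsto_rpow_mul_exp_neg_mul_atTop_nhds_zero (β₂ + 2*α) a ha
    have base2 := base.const_mul (C/(2*Ψ r) * (4*FR) * dR^5 * (2*K))
    rw [mul_zero] at base2
    apply base2.congr'
    filter_upwards [Filter.eventually_gt_atTop (0:ℝ)] with v hv
    have h1 : (v^α)^2 = v^(2*α) := by
      rw [← Real.rpow_natCast (v^α) 2, ← Real.rpow_mul hv.le]
      norm_num [mul_comm]
    have h2 : v^(β₂ + 2*α) = v^β₂ * v^(2*α) := Real.rpow_add hv _ _
    simp only [hGdef]
    rw [h1, h2, neg_mul]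
    ring
  -- ε-level
  rw [ENNReal.tendsto_nhds_zero]
  intro ε hε
  set ε' := min ε 1 with hε'def
  have hε'pos : 0 < ε' := lt_min hε zero_lt_one
  have hε'top : ε' ≠ ⊤ := ne_top_of_le_ne_top ENNReal.one_ne_top (min_le_right _ _)
  set εR := ε'.toReal with hεRdef
  have hεRpos : 0 < εR := ENNReal.toReal_pos hε'pos.ne' hε'top
  have hεReq : ENNReal.ofReal εR = ε' := ENNReal.ofReal_toReal hε'top
  -- choose v₀
  have hhalf : Filter.Tendsto (fun v => dR^2 * (v^(0:ℝ) * Real.exp (-a*v)))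
      Filter.atTop (nhds 0) := by
    have := (tendsto_rpow_mul_exp_neg_mul_atTop_nhds_zero 0 a ha).const_mul (dR^2)
    rwa [mul_zero] at this
  obtain ⟨v₀, hv₀1, hv₀⟩ : ∃ v₀ : ℝ, 1 ≤ v₀ ∧ ∀ v ≥ v₀,
      G v ≤ εR ∧ dR^2 * Real.exp (-(a*v)) ≤ 1/2 := by
    have e1 := hG.eventually (eventually_le_nhds hεRpos)
    have e2 := hhalf.eventually (eventually_le_nhds (by norm_num : (0:ℝ) < 1/2))
    obtain ⟨v₀, hv₀⟩ := Filter.eventually_atTop.mp (e1.and e2)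
    refine ⟨max v₀ 1, le_max_right _ _, fun v hv => ?_⟩
    have hv' := hv₀ v (le_trans (le_max_left _ _) hv)
    have hv1 : (1:ℝ) ≤ v := le_trans (le_max_right _ _) hv
    refine ⟨hv'.1, ?_⟩
    have h2 := hv'.2
    rwa [Real.rpow_zero, one_mul, neg_mul] at h2
  set δ := r / (2*v₀) with hδdef
  have hδ : 0 < δ := by rw [hδdef]; positivity
  have ht₀ : 0 < Ψ δ := hΨpos δ hδ
  filter_upwards [Ioo_mem_nhdsGT_of_mem (Set.left_mem_Ico.mpr ht₀)] with t ht
  obtain ⟨ht0, htt₀⟩ := ht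
  obtain ⟨hρpos, hΨρ⟩ := hinv t ht0
  set ρ := ψinv t with hρdef
  have hρδ : ρ < δ := by
    by_contra hcon
    push_neg at hcon
    have := hΨmono.monotoneOn (Set.mem_Ioi.mpr hδ) (Set.mem_Ioi.mpr hρpos) hcon
    rw [hΨρ] at this
    linarith
  have hu2v : 2*v₀ < r/ρ := by
    have h1 : r/δ < r/ρ := div_lt_div_of_pos_left hr hρpos hρδ
    have h2 : r/δ = 2*v₀ := by
      rw [hδdef]
      field_simp
    linarith
  have hu1 : 1 < r/ρ := by linarith
  have huv₀ : v₀ ≤ r/ρ := by linarith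
  have hρr : ρ < r := by
    rw [← one_lt_div hρpos]
    exact hu1
  -- choose N
  have hex : ∃ n : ℕ, r ≤ 2^n * ρ := by
    obtain ⟨n, hn⟩ := pow_unbounded_of_one_lt (r/ρ) (by norm_num : (1:ℝ) < 2)
    rw [div_lt_iff₀ hρpos] at hn
    exact ⟨n, hn.le⟩
  set N := Nat.find hex with hNdef
  have hN : r ≤ 2^N * ρ := Nat.find_spec hex
  have hN1 : 1 ≤ N := by
    rcases Nat.eq_zero_or_pos N with h0 | h
    · exfalso
      have h1 := hN
      rw [h0] at h1
      simp only [pow_zero, one_mul] at h1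
      linarith
    · exact h
  have hN2 : (2:ℝ)^(N-1) < r/ρ := by
    have hmin := Nat.find_min hex (show N-1 < N from Nat.sub_lt (by omega) one_pos)
    push_neg at hmin
    rw [lt_div_iff₀ hρpos]
    exact hmin
  -- pointwise heat kernel bound
  have hq : ∀ x y : X, r ≤ dist x y → p t x y ≤
      ENNReal.ofReal (K * Real.exp (-(a * (dist x y / ρ)))) / m (Metric.ball x ρ) := by
    intro x y hxy
    have hd0 : 0 < dist x y := lt_of_lt_of_le hr hxy
    have hs : 0 < c₂ * dist x y / t := by positivity
    have hphi := phi_lower Ψ C β₁ hC hβ₁ hΨpos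
      (fun ρ' R h1 h2 => (hreg ρ' R h1 h2).1) _ hs ρ hρpos
    have hexpineq : -(c₁ * t * Phi Ψ (c₂ * dist x y / t)) ≤ c₁ + -(a * (dist x y / ρ)) := by
      rw [hΨρ] at hphi
      have h1 : c₁ * t * ((c₂ * dist x y / t)/ρ - 1/t) ≤
          c₁ * t * Phi Ψ (c₂ * dist x y / t) :=
        mul_le_mul_of_nonneg_left hphi (by positivity)
      have h2 : c₁ * t * ((c₂ * dist x y / t)/ρ - 1/t) = a * (dist x y/ρ) - c₁ := by
        rw [hadef]
        field_simp
      rw [h2] at h1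
      linarith
    have hC₁bound : C₁ * Real.exp (-(c₁ * t * Phi Ψ (c₂ * dist x y / t))) ≤
        K * Real.exp (-(a * (dist x y / ρ))) := by
      calc C₁ * Real.exp (-(c₁ * t * Phi Ψ (c₂ * dist x y / t)))
          ≤ C₁ * Real.exp (c₁ + -(a * (dist x y / ρ))) :=
            mul_le_mul_of_nonneg_left (Real.exp_le_exp.mpr hexpineq) hC₁.le
      _ = K * Real.exp (-(a * (dist x y / ρ))) := by
          rw [Real.exp_add, hKdef]
          ring
    calc p t x y ≤ ENNReal.ofReal (C₁ * Real.exp (-(c₁ * t * Phi Ψ (c₂ * dist x y / t)))) /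
          m (Metric.ball x (ψinv t)) := hub t ht0 x y
    _ ≤ ENNReal.ofReal (K * Real.exp (-(a * (dist x y / ρ)))) / m (Metric.ball x ρ) := by
        rw [← hρdef]
        exact ENNReal.div_le_div (ENNReal.ofReal_le_ofReal hC₁bound) le_rfl
  -- smallness
  have hsmall : D₀^2 * ENNReal.ofReal (Real.exp (-(a * (r/ρ)))) ≤ 1/2 := by
    have hreal : dR^2 * Real.exp (-(a*(r/ρ))) ≤ 1/2 := (hv₀ (r/ρ) huv₀).2
    have hhalfeq : (ENNReal.ofReal (1/2 : ℝ)) = 1/2 := by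
      rw [ENNReal.ofReal_div_of_pos (by norm_num), ENNReal.ofReal_one, ENNReal.ofReal_ofNat]
    calc D₀^2 * ENNReal.ofReal (Real.exp (-(a * (r/ρ))))
        = ENNReal.ofReal (dR^2) * ENNReal.ofReal (Real.exp (-(a * (r/ρ)))) := by
          rw [hD₀eq, ← ENNReal.ofReal_pow hdR0.le]
    _ = ENNReal.ofReal (dR^2 * Real.exp (-(a * (r/ρ)))) := by
          rw [← ENNReal.ofReal_mul (by positivity)]
    _ ≤ ENNReal.ofReal (1/2 : ℝ) := ENNReal.ofReal_le_ofReal hreal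
    _ = 1/2 := hhalfeq
  -- tail bounds
  set Bd := D₀^(3+2*N) * ENNReal.ofReal (2*K) *
    ENNReal.ofReal (Real.exp (-(a * (r/ρ)))) with hBddef
  have hBdtop : Bd ≠ ⊤ := by
    rw [hBddef]
    exact ENNReal.mul_ne_top (ENNReal.mul_ne_top (ENNReal.pow_ne_top hD₀top)
      ENNReal.ofReal_ne_top) ENNReal.ofReal_ne_top
  have hTy : ∀ x, ∫⁻ y in (Metric.ball x r)ᶜ, p t x y ∂m ≤ Bd :=
    tail_y m D₀ hD₀ hD₀top hmball hdoub r ρ a K hr hρpos hρr.le ha hK0.le N hN (p t) hq hsmall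
  have hTx : ∀ y, ∫⁻ x in (Metric.ball y r)ᶜ, p t x y ∂m ≤ Bd :=
    tail_x m D₀ hD₀ hD₀top hmball hdoub r ρ a K hr hρpos hρr.le ha hK0.le N hN (p t) hq hsmall
  -- measurability helpers
  have hpm : Measurable (Function.uncurry (p t)) := hpmeas t
  have hfae : AEMeasurable f m := hf.1.aemeasurable
  have hf2ae : AEMeasurable (fun x => ENNReal.ofReal (2*(f x)^2)) m :=
    ENNReal.measurable_ofReal.comp_aemeasurable ((hfae.pow_const 2).const_mul 2)
  -- inner bound
  have hinner : ∀ x, (∫⁻ y in (Metric.ball x r)ᶜ, ENNReal.ofReal ((f x - f y)^2) * p t x y ∂m)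
      ≤ ENNReal.ofReal (2*(f x)^2) * Bd +
        ∫⁻ y in (Metric.ball x r)ᶜ, ENNReal.ofReal (2*(f y)^2) * p t x y ∂m := by
    intro x
    have hmeas_py : Measurable (fun y => p t x y) := hpm.of_uncurry_left
    calc ∫⁻ y in (Metric.ball x r)ᶜ, ENNReal.ofReal ((f x - f y)^2) * p t x y ∂m
        ≤ ∫⁻ y in (Metric.ball x r)ᶜ, (ENNReal.ofReal (2*(f x)^2) * p t x y +
            ENNReal.ofReal (2*(f y)^2) * p t x y) ∂m := by
          apply lintegral_mono
          intro y
          have hsq : (f x - f y)^2 ≤ 2*(f x)^2 + 2*(f y)^2 := by nlinarith [sq_nonneg (f x + f y)]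
          calc ENNReal.ofReal ((f x - f y)^2) * p t x y
              ≤ ENNReal.ofReal (2*(f x)^2 + 2*(f y)^2) * p t x y :=
                mul_le_mul_left (ENNReal.ofReal_le_ofReal hsq) _
          _ = (ENNReal.ofReal (2*(f x)^2) + ENNReal.ofReal (2*(f y)^2)) * p t x y := by
                rw [ENNReal.ofReal_add (by positivity) (by positivity)]
          _ = _ := add_mul _ _ _
      _ = (∫⁻ y in (Metric.ball x r)ᶜ, ENNReal.ofReal (2*(f x)^2) * p t x y ∂m) +
            ∫⁻ y in (Metric.ball x r)ᶜ, ENNReal.ofReal (2*(f y)^2) * p t x y ∂m :=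
          lintegral_add_left (measurable_const.mul hmeas_py) _
      _ ≤ ENNReal.ofReal (2*(f x)^2) * Bd +
            ∫⁻ y in (Metric.ball x r)ᶜ, ENNReal.ofReal (2*(f y)^2) * p t x y ∂m := by
          gcongr
          rw [lintegral_const_mul _ hmeas_py]
          exact mul_le_mul_right (hTy x) _
  -- swap
  have hswap : ∫⁻ x, ∫⁻ y in (Metric.ball x r)ᶜ, ENNReal.ofReal (2*(f y)^2) * p t x y ∂m ∂m
      = ∫⁻ y, ∫⁻ x in (Metric.ball y r)ᶜ, ENNReal.ofReal (2*(f y)^2) * p t x y ∂m ∂m := by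
    set g : X → X → ℝ≥0∞ := fun x y =>
      ((Metric.ball x r)ᶜ).indicator (fun y' => ENNReal.ofReal (2*(f y')^2) * p t x y') y
      with hgdef
    have hgu : AEMeasurable (Function.uncurry g) (m.prod m) := by
      have hcont : Continuous fun z : X×X => dist z.2 z.1 :=
        continuous_dist.comp (continuous_snd.prodMk continuous_fst)
      have hS : MeasurableSet {z : X×X | r ≤ dist z.2 z.1} :=
        (isClosed_le continuous_const hcont).measurableSet
      have hfun : Function.uncurry g = Set.indicator {z : X×X | r ≤ dist z.2 z.1}
          (fun z => ENNReal.ofReal (2*(f z.2)^2) * p t z.1 z.2) := by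
        funext z
        rcases z with ⟨x, y⟩
        simp only [Function.uncurry, hgdef, Set.indicator_apply, Set.mem_compl_iff,
          Metric.mem_ball, not_lt, Set.mem_setOf_eq]
      rw [hfun]
      refine AEMeasurable.indicator ?_ hS
      refine AEMeasurable.mul ?_ (hpmeas t).aemeasurable
      have h1 : AEMeasurable (fun z : X×X => f z.2) (m.prod m) :=
        hfae.comp_quasiMeasurePreserving MeasureTheory.Measure.quasiMeasurePreserving_snd
      exact ENNReal.measurable_ofReal.comp_aemeasurable ((h1.pow_const 2).const_mul 2)
    have h1 : ∀ x, ∫⁻ y in (Metric.ball x r)ᶜ, ENNReal.ofReal (2*(f y)^2) * p t x y ∂m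
        = ∫⁻ y, g x y ∂m := fun x =>
      (lintegral_indicator (Metric.isOpen_ball.measurableSet.compl) _).symm
    have h2 : ∀ y, ∫⁻ x, g x y ∂m
        = ∫⁻ x in (Metric.ball y r)ᶜ, ENNReal.ofReal (2*(f y)^2) * p t x y ∂m := by
      intro y
      have heq : ∀ x, g x y =
          ((Metric.ball y r)ᶜ).indicator (fun x' => ENNReal.ofReal (2*(f y)^2) * p t x' y) x := by
        intro x
        simp only [hgdef, Set.indicator_apply, Set.mem_compl_iff, Metric.mem_ball, not_lt]
        rw [dist_comm]
      simp_rw [heq]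
      exact lintegral_indicator (Metric.isOpen_ball.measurableSet.compl) _
    simp_rw [h1]
    rw [lintegral_lintegral_swap hgu]
    simp_rw [h2]
  -- the F identity
  have hintF : ∫⁻ x, ENNReal.ofReal (2*(f x)^2) ∂m = 2*F := by
    have heq2 : ∀ x : X, ENNReal.ofReal (2*(f x)^2) = 2 * ENNReal.ofReal ((f x)^2) := by
      intro x
      rw [ENNReal.ofReal_mul (by norm_num : (0:ℝ) ≤ 2), ENNReal.ofReal_ofNat]
    simp_rw [heq2]
    rw [lintegral_const_mul' 2 _ (by norm_num : (2:ℝ≥0∞) ≠ ⊤), hFdef]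
  -- assemble
  have hItotal : (∫⁻ x, ∫⁻ y in (Metric.ball x r)ᶜ,
      ENNReal.ofReal ((f x - f y)^2) * p t x y ∂m ∂m) ≤ 2*F*Bd + 2*F*Bd := by
    calc ∫⁻ x, ∫⁻ y in (Metric.ball x r)ᶜ, ENNReal.ofReal ((f x - f y)^2) * p t x y ∂m ∂m
        ≤ ∫⁻ x, (ENNReal.ofReal (2*(f x)^2) * Bd +
            ∫⁻ y in (Metric.ball x r)ᶜ, ENNReal.ofReal (2*(f y)^2) * p t x y ∂m) ∂m :=
          lintegral_mono hinner
    _ = (∫⁻ x, ENNReal.ofReal (2*(f x)^2) * Bd ∂m) +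
          ∫⁻ x, ∫⁻ y in (Metric.ball x r)ᶜ, ENNReal.ofReal (2*(f y)^2) * p t x y ∂m ∂m :=
        lintegral_add_left' (hf2ae.mul_const Bd) _
    _ ≤ 2*F*Bd + 2*F*Bd := by
        gcongr
        · rw [lintegral_mul_const'' Bd hf2ae, hintF]
        · rw [hswap]
          calc ∫⁻ y, ∫⁻ x in (Metric.ball y r)ᶜ, ENNReal.ofReal (2*(f y)^2) * p t x y ∂m ∂m
              ≤ ∫⁻ y, ENNReal.ofReal (2*(f y)^2) * Bd ∂m := by
                apply lintegral_mono
                intro y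
                show ∫⁻ x in (Metric.ball y r)ᶜ, ENNReal.ofReal (2*(f y)^2) * p t x y ∂m ≤
                  ENNReal.ofReal (2*(f y)^2) * Bd
                have hmeas_px : Measurable (fun x => p t x y) := hpm.of_uncurry_right
                rw [lintegral_const_mul _ hmeas_px]
                exact mul_le_mul_right (hTx y) _
          _ = 2*F*Bd := by rw [lintegral_mul_const'' Bd hf2ae, hintF]
  -- final numeric estimate
  have h1t : 1/(2*t) ≤ C*(r/ρ)^β₂/(2*Ψ r) := by
    have hq2 := (hreg ρ r hρpos hρr.le).2
    rw [hΨρ] at hq2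
    have hpow : 0 < (r/ρ)^β₂ := Real.rpow_pos_of_pos (by positivity) _
    rw [div_le_div_iff₀ (by positivity) (by positivity)]
    rw [div_le_iff₀ ht0] at hq2
    nlinarith
  have hdRN : dR^(3+2*N) ≤ dR^5*((r/ρ)^α)^2 := by
    have key : dR^(N-1) ≤ (r/ρ)^α := by
      have e1 : dR^(N-1) = ((2:ℝ)^(N-1)) ^ α := by
        rw [← h2α, ← Real.rpow_natCast ((2:ℝ)^α) (N-1), ← Real.rpow_natCast (2:ℝ) (N-1),
          ← Real.rpow_mul (by norm_num : (0:ℝ) ≤ 2),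
          ← Real.rpow_mul (by norm_num : (0:ℝ) ≤ 2), mul_comm]
      rw [e1]
      exact Real.rpow_le_rpow (by positivity) hN2.le hα0
    have e2 : dR^(3+2*N) = dR^5 * (dR^(N-1))^2 := by
      rw [← pow_mul, ← pow_add]
      congr 1
      omega
    rw [e2]
    have hsq2 : (dR^(N-1))^2 ≤ ((r/ρ)^α)^2 :=
      pow_le_pow_left₀ (by positivity) key 2
    have h5 : (0:ℝ) ≤ dR^5 := by positivity
    nlinarith
  have hfinal : ENNReal.ofReal (1/(2*t)) * (2*F*Bd + 2*F*Bd) ≤ ε' := by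
    have hbd_ofReal : Bd = ENNReal.ofReal (dR^(3+2*N) * (2*K) * Real.exp (-(a * (r/ρ)))) := by
      rw [hBddef, hD₀eq, ← ENNReal.ofReal_pow hdR0.le,
        ← ENNReal.ofReal_mul (by positivity), ← ENNReal.ofReal_mul (by positivity)]
    have h2F : 2*F*Bd + 2*F*Bd = ENNReal.ofReal (4*FR) * Bd := by
      have h4 : 2*F*Bd + 2*F*Bd = 4*F*Bd := by ring
      rw [h4, hFReq, show (4:ℝ≥0∞) = ENNReal.ofReal (4:ℝ) from (ENNReal.ofReal_ofNat 4).symm,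
        ← ENNReal.ofReal_mul (by norm_num : (0:ℝ) ≤ 4)]
    calc ENNReal.ofReal (1/(2*t)) * (2*F*Bd + 2*F*Bd)
        = ENNReal.ofReal (1/(2*t)) * (ENNReal.ofReal (4*FR) *
            ENNReal.ofReal (dR^(3+2*N) * (2*K) * Real.exp (-(a * (r/ρ))))) := by
          rw [h2F, hbd_ofReal]
    _ = ENNReal.ofReal ((1/(2*t)) * ((4*FR) * (dR^(3+2*N) * (2*K) *
          Real.exp (-(a * (r/ρ)))))) := by
          rw [← ENNReal.ofReal_mul (by positivity : (0:ℝ) ≤ 4*FR),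
            ← ENNReal.ofReal_mul (by positivity : (0:ℝ) ≤ 1/(2*t))]
    _ ≤ ENNReal.ofReal (G (r/ρ)) := by
        apply ENNReal.ofReal_le_ofReal
        have hX : (0:ℝ) ≤ 4*FR * (2*K) * Real.exp (-(a*(r/ρ))) := by positivity
        have hmain : (1/(2*t)) * dR^(3+2*N) ≤ (C*(r/ρ)^β₂/(2*Ψ r)) * (dR^5*((r/ρ)^α)^2) := by
          apply mul_le_mul h1t hdRN (by positivity) (le_of_lt (by positivity))
        calc (1/(2*t)) * ((4*FR) * (dR^(3+2*N) * (2*K) * Real.exp (-(a * (r/ρ)))))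
            = ((1/(2*t)) * dR^(3+2*N)) * (4*FR * (2*K) * Real.exp (-(a*(r/ρ)))) := by ring
        _ ≤ ((C*(r/ρ)^β₂/(2*Ψ r)) * (dR^5*((r/ρ)^α)^2)) *
              (4*FR * (2*K) * Real.exp (-(a*(r/ρ)))) :=
            mul_le_mul_of_nonneg_right hmain hX
        _ = G (r/ρ) := by
            simp only [hGdef]
            ring
    _ ≤ ENNReal.ofReal εR := ENNReal.ofReal_le_ofReal (hv₀ _ huv₀).1
    _ = ε' := hεReq
  calc ENNReal.ofReal (1/(2*t)) * ∫⁻ x, ∫⁻ y in (Metric.ball x r)ᶜ,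
        ENNReal.ofReal ((f x - f y)^2) * p t x y ∂m ∂m
      ≤ ENNReal.ofReal (1/(2*t)) * (2*F*Bd + 2*F*Bd) := mul_le_mul_right hItotal _
  _ ≤ ε' := hfinal
  _ ≤ ε := min_le_left _ _
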